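/- arXiv:2403.17170 — 4 statements merged into one kernel-verified Lean document; each statement's English description precedes it below -/
import Mathlib

section
/- The function g(w) = -log|(1 - √(1+w²))/w| is harmonic and positive on Ω \ {0}, where Ω = ℂ \ {it : |t| ≥ 1}, and g(w) → 0 as w approaches any boundary point iζ with |ζ| > 1. -/
open Complex Set Filter

private lemma aux_slit {w : ℂ} (hw : ∀ t : ℝ, 1 ≤ |t| → w ≠ t * I) :
    (1 + w ^ 2) ∈ Complex.slitPlane := by
  rw [Complex.mem_slitPlane_iff]
  by_contra h
  push_neg at h
  obtain ⟨h1, h2⟩ := h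
  have hre : (1 + w ^ 2).re = 1 + (w.re ^ 2 - w.im ^ 2) := by
    simp [pow_two, Complex.mul_re]
  have him : (1 + w ^ 2).im = 2 * w.re * w.im := by
    simp [pow_two, Complex.mul_im]; ring
  rw [hre] at h1
  rw [him] at h2
  have him2 : 1 ≤ w.im ^ 2 := by nlinarith [sq_nonneg w.re]
  have himne : w.im ≠ 0 := by intro h; rw [h] at him2; norm_num at him2
  have hre0 : w.re = 0 := by
    rcases mul_eq_zero.mp h2 with h' | h'
    · rcases mul_eq_zero.mp h' with h'' | h''
      · norm_num at h''
      · exact h''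
    · exact absurd h' himne
  have habs : 1 ≤ |w.im| := by nlinarith [_root_.sq_abs w.im, abs_nonneg w.im]
  exact hw w.im habs (by simp [Complex.ext_iff, hre0])

private lemma aux_re_sqrt_pos {z : ℂ} (hz : z ∈ Complex.slitPlane) :
    0 < (z ^ ((1 : ℂ) / 2)).re := by
  have hz0 : z ≠ 0 := Complex.slitPlane_ne_zero hz
  rw [Complex.cpow_def_of_ne_zero hz0, Complex.exp_re]
  have him : (Complex.log z * ((1 : ℂ) / 2)).im = z.arg / 2 := by
    simp [Complex.mul_im, Complex.log_im]
    ring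
  rw [him]
  have h1 : z.arg ≠ Real.pi := Complex.slitPlane_arg_ne_pi hz
  have h2 : |z.arg| ≤ Real.pi := Complex.abs_arg_le_pi z
  have h3 : -Real.pi < z.arg := Complex.neg_pi_lt_arg z
  have h4 : z.arg < Real.pi := lt_of_le_of_ne (abs_le.mp h2).2 h1
  have : 0 < Real.cos (z.arg / 2) := by
    apply Real.cos_pos_of_mem_Ioo
    constructor <;> [linarith; linarith]
  positivity

private lemma aux_key {w : ℂ} (hΩ : ∀ t : ℝ, 1 ≤ |t| → w ≠ t * I) (hw : w ≠ 0) :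
    0 < ‖(1 - (1 + w ^ 2) ^ ((1 : ℂ) / 2)) / w‖ ∧
    ‖(1 - (1 + w ^ 2) ^ ((1 : ℂ) / 2)) / w‖ < 1 ∧
    -Real.log (‖(1 - (1 + w ^ 2) ^ ((1 : ℂ) / 2)) / w‖) =
      (1 / 4) * (Real.log (‖1 + w ^ 2‖ + 1 +
          2 * Real.sqrt ((‖1 + w ^ 2‖ + (1 + w ^ 2).re) / 2))
        - Real.log (‖1 + w ^ 2‖ + 1 -
          2 * Real.sqrt ((‖1 + w ^ 2‖ + (1 + w ^ 2).re) / 2))) := by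
  set z : ℂ := 1 + w ^ 2 with hz_def
  set s : ℂ := z ^ ((1 : ℂ) / 2) with hs_def
  have hz : z ∈ Complex.slitPlane := aux_slit hΩ
  have hz0 : z ≠ 0 := Complex.slitPlane_ne_zero hz
  have hss : s * s = z := by
    rw [hs_def, ← Complex.cpow_add _ _ hz0]
    norm_num
  have hsre : 0 < s.re := aux_re_sqrt_pos hz
  have hs1 : s ≠ 1 := by
    intro h
    apply hw
    have : z = 1 := by rw [← hss, h, mul_one]
    have : w ^ 2 = 0 := by
      have := this
      rw [hz_def] at this
      linear_combination this
    exact pow_eq_zero_iff (by norm_num) |>.mp this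
  have hsm0 : s - 1 ≠ 0 := sub_ne_zero.mpr hs1
  have hsp0 : s + 1 ≠ 0 := by
    intro h
    have : (s + 1).re = 0 := by rw [h]; simp
    simp [Complex.add_re] at this
    linarith
  have hsm : 0 < ‖s - 1‖ := norm_pos_iff.mpr hsm0
  have hsp : 0 < ‖s + 1‖ := norm_pos_iff.mpr hsp0
  have hw2 : ‖w‖ ^ 2 = ‖s - 1‖ * ‖s + 1‖ := by
    rw [← norm_mul]
    have h2 : (s - 1) * (s + 1) = w ^ 2 := by linear_combination hss
    rw [h2, ← norm_pow]
  have habs1s : ‖1 - s‖ = ‖s - 1‖ := norm_sub_rev 1 s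
  have hphi_sq : ‖(1 - s) / w‖ ^ 2 = ‖s - 1‖ / ‖s + 1‖ := by
    rw [norm_div, div_pow, hw2, habs1s]
    field_simp
  have hratio : ‖s - 1‖ < ‖s + 1‖ := by
    have h2 : ‖s - 1‖ ^ 2 < ‖s + 1‖ ^ 2 := by
      rw [Complex.sq_norm, Complex.sq_norm]
      simp only [Complex.normSq_apply, Complex.sub_re, Complex.sub_im, Complex.add_re,
        Complex.add_im, Complex.one_re, Complex.one_im]
      nlinarith
    exact lt_of_pow_lt_pow_left₀ 2 (norm_nonneg _) h2
  have hpos : 0 < ‖(1 - s) / w‖ :=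
    norm_pos_iff.mpr (div_ne_zero (by rwa [sub_ne_zero, ne_comm]) hw)
  have hlt1 : ‖(1 - s) / w‖ < 1 := by
    have : ‖(1 - s) / w‖ ^ 2 < 1 := by
      rw [hphi_sq]; exact (div_lt_one hsp).mpr hratio
    nlinarith
  refine ⟨hpos, hlt1, ?_⟩
  have ha : ‖z‖ = s.re ^ 2 + s.im ^ 2 := by
    rw [← hss, norm_mul, ← sq, Complex.sq_norm, Complex.normSq_apply]; ring
  have hzre : z.re = s.re ^ 2 - s.im ^ 2 := by
    rw [← hss]; simp [Complex.mul_re]; ring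
  have hH : Real.sqrt ((‖z‖ + z.re) / 2) = s.re := by
    have h1 : (‖z‖ + z.re) / 2 = s.re ^ 2 := by rw [ha, hzre]; ring
    rw [h1, Real.sqrt_sq hsre.le]
  rw [hH]
  have habsp : ‖z‖ + 1 + 2 * s.re = ‖s + 1‖ ^ 2 := by
    rw [Complex.sq_norm, Complex.normSq_apply]
    simp only [Complex.add_re, Complex.add_im, Complex.one_re, Complex.one_im]
    rw [ha]; ring
  have habsm : ‖z‖ + 1 - 2 * s.re = ‖s - 1‖ ^ 2 := by
    rw [Complex.sq_norm, Complex.normSq_apply]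
    simp only [Complex.sub_re, Complex.sub_im, Complex.one_re, Complex.one_im]
    rw [ha]; ring
  rw [habsp, habsm]
  have e1 : Real.log (‖(1 - s) / w‖ ^ 2) =
      Real.log (‖s - 1‖) - Real.log (‖s + 1‖) := by
    rw [hphi_sq, Real.log_div hsm.ne' hsp.ne']
  rw [Real.log_pow] at e1
  have e2 := Real.log_pow (‖s + 1‖) 2
  have e3 := Real.log_pow (‖s - 1‖) 2
  push_cast at e1 e2 e3
  rw [e2, e3]
  linarith

private noncomputable def auxF (w : ℂ) : ℝ :=
  (1 / 4) * (Real.log (‖1 + w ^ 2‖ + 1 +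
      2 * Real.sqrt ((‖1 + w ^ 2‖ + (1 + w ^ 2).re) / 2))
    - Real.log (‖1 + w ^ 2‖ + 1 -
      2 * Real.sqrt ((‖1 + w ^ 2‖ + (1 + w ^ 2).re) / 2)))

private lemma auxF_boundary {ζ : ℝ} (hζ : 1 < |ζ|) :
    ContinuousAt auxF ((ζ : ℂ) * I) ∧ auxF ((ζ : ℂ) * I) = 0 := by
  set w₀ : ℂ := (ζ : ℂ) * I with hw₀
  have hr : (1 : ℝ) < ζ ^ 2 := by nlinarith [_root_.sq_abs ζ, abs_nonneg ζ]
  have hz : (1 : ℂ) + w₀ ^ 2 = ((1 - ζ ^ 2 : ℝ) : ℂ) := by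
    rw [hw₀]; push_cast; ring_nf; rw [Complex.I_sq]; ring
  have hAv : ‖1 + w₀ ^ 2‖ = ζ ^ 2 - 1 := by
    rw [hz, Complex.norm_real, Real.norm_eq_abs, abs_of_nonpos (by nlinarith)]; ring
  have hRv : (1 + w₀ ^ 2).re = 1 - ζ ^ 2 := by rw [hz, Complex.ofReal_re]
  have hHv : Real.sqrt ((‖1 + w₀ ^ 2‖ + (1 + w₀ ^ 2).re) / 2) = 0 := by
    rw [hAv, hRv, show (ζ ^ 2 - 1 + (1 - ζ ^ 2)) / 2 = (0 : ℝ) by ring, Real.sqrt_zero]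
  have hA : ContinuousAt (fun w : ℂ => ‖1 + w ^ 2‖) w₀ :=
    (continuous_norm.comp (by continuity)).continuousAt
  have hR : ContinuousAt (fun w : ℂ => (1 + w ^ 2).re) w₀ :=
    (Complex.continuous_re.comp (by continuity)).continuousAt
  have hH : ContinuousAt
      (fun w : ℂ => Real.sqrt ((‖1 + w ^ 2‖ + (1 + w ^ 2).re) / 2)) w₀ :=
    Real.continuous_sqrt.continuousAt.comp ((hA.add hR).div_const 2)
  have hu : ContinuousAt (fun w : ℂ => ‖1 + w ^ 2‖ + 1 +
      2 * Real.sqrt ((‖1 + w ^ 2‖ + (1 + w ^ 2).re) / 2)) w₀ :=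
    (hA.add continuousAt_const).add (continuousAt_const.mul hH)
  have hv : ContinuousAt (fun w : ℂ => ‖1 + w ^ 2‖ + 1 -
      2 * Real.sqrt ((‖1 + w ^ 2‖ + (1 + w ^ 2).re) / 2)) w₀ :=
    (hA.add continuousAt_const).sub (continuousAt_const.mul hH)
  have huv : ‖1 + w₀ ^ 2‖ + 1 +
      2 * Real.sqrt ((‖1 + w₀ ^ 2‖ + (1 + w₀ ^ 2).re) / 2) = ζ ^ 2 := by
    rw [hHv, hAv]; ring
  have hvv : ‖1 + w₀ ^ 2‖ + 1 -
      2 * Real.sqrt ((‖1 + w₀ ^ 2‖ + (1 + w₀ ^ 2).re) / 2) = ζ ^ 2 := by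
    rw [hHv, hAv]; ring
  have hne : (ζ ^ 2 : ℝ) ≠ 0 := by nlinarith
  have hlogu : ContinuousAt (fun w : ℂ => Real.log (‖1 + w ^ 2‖ + 1 +
      2 * Real.sqrt ((‖1 + w ^ 2‖ + (1 + w ^ 2).re) / 2))) w₀ := by
    exact hu.log (by rw [huv]; exact hne)
  have hlogv : ContinuousAt (fun w : ℂ => Real.log (‖1 + w ^ 2‖ + 1 -
      2 * Real.sqrt ((‖1 + w ^ 2‖ + (1 + w ^ 2).re) / 2))) w₀ := by
    exact hv.log (by rw [hvv]; exact hne)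
  constructor
  · exact continuousAt_const.mul (hlogu.sub hlogv)
  · show (1 / 4 : ℝ) * _ = 0
    rw [huv, hvv]
    ring

private lemma aux_isOpen : IsOpen ({w : ℂ | ∀ t : ℝ, 1 ≤ |t| → w ≠ t * I} \ {0}) := by
  have h1 : {w : ℂ | ∀ t : ℝ, 1 ≤ |t| → w ≠ t * I} =
      ({w : ℂ | w.re = 0} ∩ {w : ℂ | 1 ≤ |w.im|})ᶜ := by
    ext w
    simp only [mem_setOf_eq, mem_compl_iff, mem_inter_iff, not_and]
    constructor
    · intro h hre hge
      exact h w.im hge (by simp [Complex.ext_iff, hre])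
    · intro h t ht heq
      rw [heq] at h
      simp at h
      linarith
  rw [diff_eq, h1]
  exact (((isClosed_eq Complex.continuous_re continuous_const).inter
    (isClosed_le continuous_const (continuous_abs.comp Complex.continuous_im))).isOpen_compl).inter
    isOpen_compl_singleton

/-- g(w) = -log|(1-√(1+w²))/w| is harmonic (locally the real part of a
holomorphic function) and positive on Ω \ {0}, Ω = ℂ \ {it : |t| ≥ 1}, and g(w) → 0
as w → iζ for any boundary point iζ with |ζ| > 1. -/
theorem greens_function_of_Omega :
    let Ω : Set ℂ := {w | ∀ t : ℝ, 1 ≤ |t| → w ≠ t * I}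
    let g : ℂ → ℝ := fun w => -Real.log ‖(1 - (1 + w ^ 2) ^ ((1 : ℂ) / 2)) / w‖
    (∀ w ∈ Ω \ {0}, ∃ U ∈ nhds w, ∃ f : ℂ → ℂ,
        DifferentiableOn ℂ f U ∧ ∀ z ∈ U, g z = (f z).re) ∧
    (∀ w ∈ Ω \ {0}, 0 < g w) ∧
    (∀ ζ : ℝ, 1 < |ζ| →
        Tendsto g (nhdsWithin ((ζ : ℂ) * I) (Ω \ {0})) (nhds 0)) := by
  intro Ω g
  have hφdiff : ∀ x ∈ Ω \ {0},
      DifferentiableAt ℂ (fun z : ℂ => (1 - (1 + z ^ 2) ^ ((1 : ℂ) / 2)) / z) x := by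
    rintro x ⟨hx, hx0⟩
    have h1 : DifferentiableAt ℂ (fun z : ℂ => 1 + z ^ 2) x := by fun_prop
    have h2 : DifferentiableAt ℂ (fun z : ℂ => (1 + z ^ 2) ^ ((1 : ℂ) / 2)) x :=
      h1.cpow (differentiableAt_const _) (aux_slit hx)
    exact ((differentiableAt_const 1).sub h2).div differentiableAt_id (by simpa using hx0)
  refine ⟨?_, ?_, ?_⟩
  · rintro w ⟨hw, hw0⟩
    have hw0' : w ≠ 0 := by simpa using hw0
    obtain ⟨hpos, hlt1, _⟩ := aux_key hw hw0'
    have hφne : (1 - (1 + w ^ 2) ^ ((1 : ℂ) / 2)) / w ≠ 0 := norm_pos_iff.mp hpos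
    obtain ⟨c, hc1, hcslit⟩ : ∃ c : ℂ, ‖c‖ = 1 ∧
        c * ((1 - (1 + w ^ 2) ^ ((1 : ℂ) / 2)) / w) ∈ Complex.slitPlane := by
      by_cases h : (1 - (1 + w ^ 2) ^ ((1 : ℂ) / 2)) / w ∈ Complex.slitPlane
      · exact ⟨1, by simp, by rwa [one_mul]⟩
      · refine ⟨I, by simp, ?_⟩
        rw [Complex.mem_slitPlane_iff] at h ⊢
        push_neg at h
        right
        have hre : ((1 - (1 + w ^ 2) ^ ((1 : ℂ) / 2)) / w).re ≠ 0 :=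
          fun hre => hφne (Complex.ext hre h.2)
        simpa [Complex.mul_im] using hre
    have hcont : ContinuousOn
        (fun z : ℂ => c * ((1 - (1 + z ^ 2) ^ ((1 : ℂ) / 2)) / z)) (Ω \ {0}) :=
      fun x hx => ((hφdiff x hx).const_mul c).continuousAt.continuousWithinAt
    have hUopen : IsOpen ((Ω \ {0}) ∩
        (fun z : ℂ => c * ((1 - (1 + z ^ 2) ^ ((1 : ℂ) / 2)) / z)) ⁻¹' Complex.slitPlane) :=
      hcont.isOpen_inter_preimage aux_isOpen Complex.isOpen_slitPlane
    refine ⟨_, hUopen.mem_nhds ⟨⟨hw, hw0⟩, hcslit⟩,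
      fun z => -Complex.log (c * ((1 - (1 + z ^ 2) ^ ((1 : ℂ) / 2)) / z)), ?_, ?_⟩
    · intro x hx
      exact (((hφdiff x hx.1).const_mul c).clog hx.2).neg.differentiableWithinAt
    · intro x _
      show -Real.log (‖(1 - (1 + x ^ 2) ^ ((1 : ℂ) / 2)) / x‖) = _
      rw [Complex.neg_re, Complex.log_re, norm_mul, hc1, one_mul]
  · rintro w ⟨hw, hw0⟩
    obtain ⟨hpos, hlt1, _⟩ := aux_key hw (by simpa using hw0)
    have := Real.log_neg hpos hlt1
    show 0 < -Real.log _
    linarith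
  · intro ζ hζ
    obtain ⟨hFc, hF0⟩ := auxF_boundary hζ
    have h1 : Tendsto auxF (nhdsWithin ((ζ : ℂ) * I) (Ω \ {0})) (nhds 0) := by
      rw [← hF0]
      exact hFc.continuousWithinAt
    refine h1.congr' ?_
    filter_upwards [self_mem_nhdsWithin] with x hx
    exact ((aux_key hx.1 (by simpa using hx.2)).2.2).symm
end

section
/- For every w in Ω = ℂ \ {it : |t| ≥ 1} with w ≠ 0, we have 0 < |(1 - √(1+w²))/w| < 1. -/
open Complex

/-- for every w ∈ Ω = ℂ \ {it : |t| ≥ 1} with w ≠ 0,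
0 < |(1 - √(1+w²))/w| < 1 (principal branch square root). -/
theorem abs_psi_lt_one (w : ℂ) (hw : ∀ t : ℝ, 1 ≤ |t| → w ≠ t * I) (hw0 : w ≠ 0) :
    0 < ‖(1 - (1 + w ^ 2) ^ ((1 : ℂ) / 2)) / w‖ ∧
      ‖(1 - (1 + w ^ 2) ^ ((1 : ℂ) / 2)) / w‖ < 1 := by
  set z : ℂ := 1 + w ^ 2 with hzdef
  -- key fact: z is not a nonpositive real
  have hkey : ¬ (z.im = 0 ∧ z.re ≤ 0) := by
    rintro ⟨him, hre⟩
    have him' : w.re * w.im + w.im * w.re = 0 := by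
      have : z.im = w.re * w.im + w.im * w.re := by
        simp [hzdef, pow_two, Complex.mul_im]
      linarith [this ▸ him]
    have hre' : 1 + (w.re * w.re - w.im * w.im) ≤ 0 := by
      have : z.re = 1 + (w.re * w.re - w.im * w.im) := by
        simp [hzdef, pow_two, Complex.mul_re]
      linarith [this ▸ hre]
    have ha : w.re = 0 := by nlinarith
    have hb : 1 ≤ |w.im| := by nlinarith [abs_nonneg w.im, _root_.sq_abs w.im, sq_nonneg w.im]
    exact hw w.im hb (by apply Complex.ext <;> simp [ha])
  have hz0 : z ≠ 0 := by
    intro h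
    exact hkey ⟨by simp [h], by simp [h]⟩
  set s : ℂ := z ^ ((1 : ℂ) / 2) with hsdef
  have hs2 : s * s = z := by
    rw [hsdef, ← Complex.cpow_add _ _ hz0]
    norm_num
  -- Re s > 0
  have harg : |z.arg| < Real.pi := by
    have h1 := Complex.arg_le_pi z
    have h2 := Complex.neg_pi_lt_arg z
    have h3 : z.arg ≠ Real.pi := by
      intro h
      obtain ⟨hr, hi⟩ := Complex.arg_eq_pi_iff.mp h
      exact hkey ⟨hi, le_of_lt hr⟩
    rw [abs_lt]
    exact ⟨h2, lt_of_le_of_ne h1 h3⟩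
  have hsre : 0 < s.re := by
    rw [hsdef, Complex.cpow_def_of_ne_zero hz0, Complex.exp_re]
    apply mul_pos (Real.exp_pos _)
    have him : (Complex.log z * ((1 : ℂ) / 2)).im = z.arg / 2 := by
      simp [Complex.mul_im, Complex.log_im]
      ring
    rw [him]
    apply Real.cos_pos_of_mem_Ioo
    constructor
    · have := (abs_lt.mp harg).1; linarith
    · have := (abs_lt.mp harg).2; linarith
  have h1ms : (1 : ℂ) - s ≠ 0 := by
    intro h
    have hs1 : s = 1 := by linear_combination -h
    have : w ^ 2 = 0 := by
      have := hs2
      rw [hs1, hzdef] at this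
      linear_combination -this
    exact hw0 (sq_eq_zero_iff.mp this)
  have h1ps : (1 : ℂ) + s ≠ 0 := by
    intro h
    have := congrArg Complex.re h
    simp at this
    linarith
  have hA : 0 < ‖1 - s‖ := norm_pos_iff.mpr h1ms
  have hW : 0 < ‖w‖ := norm_pos_iff.mpr hw0
  have hB : 0 < ‖1 + s‖ := norm_pos_iff.mpr h1ps
  have hw2 : w ^ 2 = -((1 - s) * (1 + s)) := by
    linear_combination -hzdef - hs2
  have hAB : ‖w‖ ^ 2 = ‖1 - s‖ * ‖1 + s‖ := by
    calc ‖w‖ ^ 2 = ‖w ^ 2‖ := (norm_pow _ _).symm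
      _ = ‖1 - s‖ * ‖1 + s‖ := by
          rw [hw2, norm_neg, norm_mul]
  have hsq : ‖1 - s‖ ^ 2 < ‖1 + s‖ ^ 2 := by
    rw [Complex.sq_norm, Complex.sq_norm, Complex.normSq_apply, Complex.normSq_apply]
    simp only [Complex.add_re, Complex.add_im, Complex.sub_re, Complex.sub_im,
      Complex.one_re, Complex.one_im]
    nlinarith [hsre]
  have hABlt : ‖1 - s‖ < ‖1 + s‖ :=
    lt_of_pow_lt_pow_left₀ 2 (norm_nonneg _) hsq
  have hAW : ‖1 - s‖ < ‖w‖ := by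
    have h1 : ‖1 - s‖ ^ 2 < ‖w‖ ^ 2 := by
      rw [hAB, pow_two]
      exact mul_lt_mul_of_pos_left hABlt hA
    exact lt_of_pow_lt_pow_left₀ 2 (norm_nonneg _) h1
  constructor
  · exact norm_pos_iff.mpr (div_ne_zero h1ms hw0)
  · rw [norm_div]
    exact (div_lt_one hW).mpr hAW
end

section
/- The formal power series solution h(x) = ∑_{k≥1} a_k x^{-k} of h'' + h'/x + h - 4/(25x²) + h²/2 - 4h/(25x²) = 0 (as a formal series in 1/x) has a₁ = 0, a₂ = 4/25, a₃ = 0, and a₄ = -392/625. -/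
open PowerSeries

set_option linter.deprecated false in
theorem coeff_derivativeFun' (f : PowerSeries ℂ) (n : ℕ) :
    coeff n (derivativeFun f) = coeff (n + 1) f * (n + 1) :=
  coeff_derivative f n

set_option linter.deprecated false in
theorem constantCoeff_derivativeFun' (f : PowerSeries ℂ) :
    constantCoeff (derivativeFun f) = coeff 1 f := by
  rw [← coeff_zero_eq_constantCoeff_apply, coeff_derivativeFun']; simp

set_option maxHeartbeats 2000000 in
/-- writing h(x) = ∑_{k≥1} aₖ x^{-k} as a formal power series H in the
variable u = 1/x (no constant term), with the formal x-derivative D = -X²·d/dX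
(so that (x^{-k})' = -k x^{-k-1}), a solution of
h'' + h'/x + h - 4/(25x²) + h²/2 - 4h/(25x²) = 0 has
a₁ = 0, a₂ = 4/25, a₃ = 0, a₄ = -392/625. -/
theorem painleve_I_asymptotic_coefficients (H : PowerSeries ℂ)
    (h0 : constantCoeff H = 0)
    (hode :
      (fun F : PowerSeries ℂ => -(PowerSeries.X ^ 2) * derivativeFun F)
          ((fun F : PowerSeries ℂ => -(PowerSeries.X ^ 2) * derivativeFun F) H)
        + PowerSeries.X * ((fun F : PowerSeries ℂ => -(PowerSeries.X ^ 2) * derivativeFun F) H)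
        + H - PowerSeries.C (R := ℂ) (4 / 25) * PowerSeries.X ^ 2
        + PowerSeries.C (R := ℂ) (1 / 2) * H ^ 2
        - PowerSeries.C (R := ℂ) (4 / 25) * PowerSeries.X ^ 2 * H = 0) :
    coeff 1 H = 0 ∧ coeff 2 H = 4 / 25 ∧ coeff 3 H = 0 ∧
      coeff 4 H = -392 / 625 := by
  simp only [] at hode
  have e : ∀ n : ℕ, coeff n ((-(PowerSeries.X ^ 2) * derivativeFun (-(PowerSeries.X ^ 2) * derivativeFun H))
        + PowerSeries.X * (-(PowerSeries.X ^ 2) * derivativeFun H)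
        + H - PowerSeries.C (R := ℂ) (4 / 25) * PowerSeries.X ^ 2
        + PowerSeries.C (R := ℂ) (1 / 2) * H ^ 2
        - PowerSeries.C (R := ℂ) (4 / 25) * PowerSeries.X ^ 2 * H) = 0 := by
    intro n; rw [hode]; simp
  have h1 := e 1
  simp [coeff_mul, Finset.Nat.sum_antidiagonal_eq_sum_range_succ_mk, Finset.sum_range_succ,
    coeff_derivativeFun', constantCoeff_derivativeFun', coeff_X_pow, coeff_X, h0, pow_two] at h1
  have h2 := e 2
  simp [coeff_mul, Finset.Nat.sum_antidiagonal_eq_sum_range_succ_mk, Finset.sum_range_succ,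
    coeff_derivativeFun', constantCoeff_derivativeFun', coeff_X_pow, coeff_X, h0, pow_two] at h2
  have h3 := e 3
  simp [coeff_mul, Finset.Nat.sum_antidiagonal_eq_sum_range_succ_mk, Finset.sum_range_succ,
    coeff_derivativeFun', constantCoeff_derivativeFun', coeff_X_pow, coeff_X, h0, pow_two] at h3
  have h4 := e 4
  simp [coeff_mul, Finset.Nat.sum_antidiagonal_eq_sum_range_succ_mk, Finset.sum_range_succ,
    coeff_derivativeFun', constantCoeff_derivativeFun', coeff_X_pow, coeff_X, h0, pow_two] at h4
  simp only [h1] at h2 h3 h4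
  ring_nf at h2 h3 h4
  refine ⟨h1, ?_, ?_, ?_⟩
  · linear_combination h2
  · linear_combination h3
  · linear_combination h4 - ((1:ℂ)/2 * (coeff 2 H) + 98/25) * (by linear_combination h2 : coeff 2 H = 4/25)
end

section
/- For fixed n ≥ 1, fixed z with |z| < 1, and Re(x) → +∞, the tail ρ_{n,0}(z,x) = (1-z) ∑_{k=n}^∞ z^k k!/(x)_{k+1} satisfies |ρ_{n,0}(z,x)| = O(|x|^{-n}); in particular |ρ_{n,0}(z,x)| ≤ C(n,z)/|x|^n for all x with Re(x) ≥ 1. -/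
open Complex

lemma fact_le_prod_aux (n k : ℕ) :
    (n + k).factorial ≤ n.factorial * ∏ i ∈ Finset.range (k + 1), (n + i + 1) := by
  induction k with
  | zero =>
      simp [Nat.factorial]
      nlinarith [Nat.factorial_pos n]
  | succ k ih =>
      have h1 : (n + (k + 1)).factorial = (n + k + 1) * (n + k).factorial := by
        rw [← Nat.add_assoc, Nat.factorial_succ]
      rw [h1, Finset.prod_range_succ]
      calc (n + k + 1) * (n + k).factorial
          ≤ (n + k + 1) * (n.factorial * ∏ i ∈ Finset.range (k + 1), (n + i + 1)) :=
            Nat.mul_le_mul_left _ ih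
        _ ≤ (n + (k + 1) + 1) * (n.factorial * ∏ i ∈ Finset.range (k + 1), (n + i + 1)) := by
            apply Nat.mul_le_mul_right; omega
        _ = n.factorial * ((∏ i ∈ Finset.range (k + 1), (n + i + 1)) * (n + (k + 1) + 1)) := by
            ring

/-- for fixed n ≥ 1 and fixed |z| < 1, the tail
ρ_{n,0}(z,x) = (1-z)∑_{k=n}^∞ z^k k!/(x)_{k+1} satisfies
|ρ_{n,0}(z,x)| ≤ C(n,z)/|x|^n uniformly over Re x ≥ 1. -/
theorem rho_tail_large_x (n : ℕ) (hn : 1 ≤ n) (z : ℂ) (hz : ‖z‖ < 1) :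
    ∃ C : ℝ, ∀ x : ℂ, 1 ≤ x.re →
      ‖(1 - z) * ∑' k : ℕ,
          z ^ (n + k) * (Nat.factorial (n + k) : ℂ) /
            ∏ j ∈ Finset.range (n + k + 1), (x + j)‖
        ≤ C / ‖x‖ ^ n := by
  set a := ‖z‖ with ha
  have ha0 : 0 ≤ a := norm_nonneg z
  have h1a : 0 < 1 - a := by linarith
  refine ⟨‖1 - z‖ * ((n.factorial : ℝ) * a ^ n / (1 - a)), ?_⟩
  intro x hx
  have hxabs : 1 ≤ ‖x‖ := le_trans hx (Complex.re_le_norm x)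
  have hxpos : (0:ℝ) < ‖x‖ ^ n := by positivity
  have habsj : ∀ j : ℕ, ‖x‖ ≤ ‖x + j‖ := by
    intro j
    have hj : (0:ℝ) ≤ (j:ℝ) := Nat.cast_nonneg j
    have h2 : (‖x‖)^2 ≤ (‖x + j‖)^2 := by
      simp only [Complex.sq_norm, Complex.normSq_apply, Complex.add_re, Complex.add_im,
        Complex.natCast_re, Complex.natCast_im, add_zero]
      nlinarith
    nlinarith [norm_nonneg (x + j), norm_nonneg x]
  have habsj2 : ∀ j : ℕ, ((j:ℝ) + 1) ≤ ‖x + j‖ := by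
    intro j
    calc ((j:ℝ) + 1) ≤ (x + j).re := by
          simp only [Complex.add_re, Complex.natCast_re]; linarith
      _ ≤ ‖x + j‖ := Complex.re_le_norm _
  -- termwise bound
  have hterm : ∀ k : ℕ, ‖z ^ (n + k) * ((n + k).factorial : ℂ) /
      ∏ j ∈ Finset.range (n + k + 1), (x + j)‖ ≤
      ((n.factorial : ℝ) / ‖x‖ ^ n) * a ^ (n + k) := by
    intro k
    have hP2pos : (0:ℝ) < ∏ i ∈ Finset.range (k + 1), ((n + i + 1 : ℕ) : ℝ) := by
      apply Finset.prod_pos; intro i _; positivity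
    have hDen : ‖x‖ ^ n * ∏ i ∈ Finset.range (k + 1), ((n + i + 1 : ℕ) : ℝ) ≤
        ∏ j ∈ Finset.range (n + k + 1), ‖x + j‖ := by
      have hsplit : n + k + 1 = n + (k + 1) := by omega
      calc ‖x‖ ^ n * ∏ i ∈ Finset.range (k + 1), ((n + i + 1 : ℕ) : ℝ)
          = (∏ _j ∈ Finset.range n, ‖x‖) *
              ∏ i ∈ Finset.range (k + 1), ((n + i + 1 : ℕ) : ℝ) := by
            rw [Finset.prod_const, Finset.card_range]
        _ ≤ (∏ j ∈ Finset.range n, ‖x + j‖) *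
              ∏ i ∈ Finset.range (k + 1), ‖x + (n + i : ℕ)‖ := by
            apply mul_le_mul
            · exact Finset.prod_le_prod (fun _ _ => norm_nonneg x) (fun j _ => habsj j)
            · apply Finset.prod_le_prod (fun i _ => by positivity)
              intro i _
              have := habsj2 (n + i)
              push_cast at this ⊢
              linarith
            · exact le_of_lt hP2pos
            · exact Finset.prod_nonneg fun _ _ => norm_nonneg _
        _ = ∏ j ∈ Finset.range (n + k + 1), ‖x + j‖ := by
            rw [hsplit]
            conv_rhs => rw [Finset.prod_range_add]
    have hnorm : ‖z ^ (n + k) * ((n + k).factorial : ℂ) /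
        ∏ j ∈ Finset.range (n + k + 1), (x + j)‖ =
        a ^ (n + k) * ((n + k).factorial : ℝ) /
          ∏ j ∈ Finset.range (n + k + 1), ‖x + j‖ := by
      rw [norm_div, norm_mul, norm_pow, Complex.norm_natCast, norm_prod]
    rw [hnorm]
    have hDpos : (0:ℝ) < ∏ j ∈ Finset.range (n + k + 1), ‖x + j‖ := by
      apply Finset.prod_pos; intro j _
      exact lt_of_lt_of_le (by linarith) (habsj j)
    rw [div_le_iff₀ hDpos]
    have hfact : ((n + k).factorial : ℝ) ≤
        (n.factorial : ℝ) * ∏ i ∈ Finset.range (k + 1), ((n + i + 1 : ℕ) : ℝ) := by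
      have := fact_le_prod_aux n k
      exact_mod_cast Nat.cast_le.mpr this |>.trans_eq (by push_cast; ring)
    calc a ^ (n + k) * ((n + k).factorial : ℝ)
        ≤ a ^ (n + k) * ((n.factorial : ℝ) * ∏ i ∈ Finset.range (k + 1), ((n + i + 1 : ℕ) : ℝ)) :=
          mul_le_mul_of_nonneg_left hfact (by positivity)
      _ = ((n.factorial : ℝ) / ‖x‖ ^ n) * a ^ (n + k) *
            (‖x‖ ^ n * ∏ i ∈ Finset.range (k + 1), ((n + i + 1 : ℕ) : ℝ)) := by
          field_simp
      _ ≤ ((n.factorial : ℝ) / ‖x‖ ^ n) * a ^ (n + k) *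
            (∏ j ∈ Finset.range (n + k + 1), ‖x + j‖) :=
          mul_le_mul_of_nonneg_left hDen (by positivity)
  -- geometric sum
  have hgeo : HasSum (fun k : ℕ => ((n.factorial : ℝ) / ‖x‖ ^ n) * a ^ (n + k))
      (((n.factorial : ℝ) / ‖x‖ ^ n) * (a ^ n * (1 - a)⁻¹)) := by
    have h := hasSum_geometric_of_lt_one ha0 hz
    have h2 := (h.mul_left (a ^ n)).mul_left ((n.factorial : ℝ) / ‖x‖ ^ n)
    convert h2 using 2 with k
    · rfl
    · rw [pow_add]
  have hsum : ‖∑' k : ℕ, z ^ (n + k) * ((n + k).factorial : ℂ) /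
      ∏ j ∈ Finset.range (n + k + 1), (x + j)‖ ≤
      ((n.factorial : ℝ) / ‖x‖ ^ n) * (a ^ n * (1 - a)⁻¹) :=
    tsum_of_norm_bounded hgeo hterm
  rw [norm_mul]
  have heq : ‖1 - z‖ * ((n.factorial : ℝ) * a ^ n / (1 - a)) / ‖x‖ ^ n =
      ‖1 - z‖ * (((n.factorial : ℝ) / ‖x‖ ^ n) * (a ^ n * (1 - a)⁻¹)) := by
    simp only [div_eq_mul_inv]
    ring
  rw [heq]
  exact mul_le_mul_of_nonneg_left hsum (norm_nonneg _)
end
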